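/- Let χ be the unique nontrivial Dirichlet character modulo 4, and for n ≥ 1 set c_n = Σ_{d | n, d ≥ 1} d²·χ(d). Then for every s ∈ ℂ with Re s > 3, the integral ∫_{0}^{∞} (Σ_{n=1}^{∞} c_n e^{−2πnx}) · x^{s−1} dx converges absolutely and equals (2π)^{−s} · Γ(s) · ζ(s) · L(χ, s−2), where Γ is the Gamma function, ζ is the Riemann zeta function, and L(χ, ·) is the Dirichlet L-function of χ. (The integrand is E_{3,−4}(ix) + 1/4 for the weight-3 Eisenstein series E_{3,−4}.) -/

import Mathlib

open Complex MeasureTheory LSeries Set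
open scoped LSeries.notation

/-- The unique nontrivial Dirichlet character modulo 4:
`χ(n) = 1` for `n ≡ 1 (mod 4)`, `χ(n) = −1` for `n ≡ 3 (mod 4)`, `χ(n) = 0` for even `n`. -/
noncomputable def chiFour (n : ℕ) : ℂ :=
  if n % 4 = 1 then 1 else if n % 4 = 3 then -1 else 0

/-- The Fourier coefficients `c_n = Σ_{d | n} d²·χ(d)` of the weight-3 Eisenstein series
`E_{3,−4}(τ) + 1/4`. -/
noncomputable def eisensteinCoeff (n : ℕ) : ℂ :=
  ∑ d ∈ n.divisors, (d : ℂ) ^ 2 * chiFour d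

lemma norm_chiFour_le (n : ℕ) : ‖chiFour n‖ ≤ 1 := by
  unfold chiFour; split_ifs <;> simp

lemma norm_eis_le (n : ℕ) : ‖eisensteinCoeff n‖ ≤ (n : ℝ) ^ 3 := by
  calc ‖eisensteinCoeff n‖ ≤ ∑ d ∈ n.divisors, ‖(d : ℂ) ^ 2 * chiFour d‖ := norm_sum_le _ _
    _ ≤ ∑ d ∈ n.divisors, (n : ℝ) ^ 2 := by
        refine Finset.sum_le_sum fun d hd => ?_
        have hdn : d ≤ n := Nat.divisor_le hd
        rw [norm_mul]
        have h1 : ‖(d : ℂ) ^ 2‖ ≤ (n : ℝ) ^ 2 := by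
          rw [norm_pow, Complex.norm_natCast]
          exact pow_le_pow_left₀ (by positivity) (by exact_mod_cast hdn) 2
        calc ‖(d:ℂ)^2‖ * ‖chiFour d‖ ≤ (n:ℝ)^2 * 1 :=
              mul_le_mul h1 (norm_chiFour_le d) (norm_nonneg _) (by positivity)
          _ = (n:ℝ)^2 := mul_one _
    _ = n.divisors.card * (n : ℝ) ^ 2 := by rw [Finset.sum_const, nsmul_eq_mul]
    _ ≤ (n : ℝ) * (n : ℝ) ^ 2 := by
        have hcard : n.divisors.card ≤ n := by
          have hsub : n.divisors ⊆ Finset.Icc 1 n := fun d hd =>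
            Finset.mem_Icc.mpr ⟨Nat.pos_of_mem_divisors hd, Nat.divisor_le hd⟩
          simpa using Finset.card_le_card hsub
        have : (n.divisors.card : ℝ) ≤ (n:ℝ) := by exact_mod_cast hcard
        nlinarith [sq_nonneg (n:ℝ)]
    _ = (n : ℝ) ^ 3 := by ring

lemma summable_norm_exp {t : ℝ} (ht : 0 < t) :
    Summable fun n : ℕ => ‖eisensteinCoeff (n + 1)‖ *
      Real.exp (-(2 * Real.pi * ((n : ℝ) + 1)) * t) := by
  set r := Real.exp (-(2 * Real.pi * t)) with hr
  have hr0 : (0:ℝ) ≤ r := (Real.exp_pos _).le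
  have hr1 : r < 1 := by
    rw [hr, Real.exp_lt_one_iff]
    nlinarith [Real.pi_pos]
  have hgeo : Summable fun n : ℕ => (n : ℝ) ^ 3 * r ^ n :=
    summable_pow_mul_geometric_of_norm_lt_one 3 (by rwa [Real.norm_eq_abs, _root_.abs_of_nonneg hr0])
  have hgeo' := (summable_nat_add_iff 1).mpr hgeo
  refine hgeo'.of_nonneg_of_le (fun n => by positivity) (fun n => ?_)
  have h2 : Real.exp (-(2 * Real.pi * ((n:ℝ)+1)) * t) = r ^ (n + 1) := by
    rw [hr, ← Real.exp_nat_mul]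
    congr 1
    push_cast
    ring
  rw [h2]
  have h1 : ‖eisensteinCoeff (n + 1)‖ ≤ ((n + 1 : ℕ) : ℝ) ^ 3 := norm_eis_le (n + 1)
  have h3 : (0:ℝ) ≤ r ^ (n+1) := by positivity
  exact mul_le_mul_of_nonneg_right h1 h3

noncomputable def gSeq (n : ℕ) : ℂ := (n : ℂ) ^ 2 * chiFour n

lemma conv_eq : (1 : ℕ → ℂ) ⍟ gSeq = eisensteinCoeff := by
  funext n
  rw [LSeries.convolution_def]
  simp only [Pi.one_apply, one_mul]
  exact Nat.sum_divisorsAntidiagonal' (f := fun _ d => gSeq d)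

lemma gSummable {s : ℂ} (hs : 3 < s.re) : LSeriesSummable gSeq s := by
  refine LSeriesSummable_of_le_const_mul_rpow (x := 3) (by linarith) ⟨1, fun n hn => ?_⟩
  rw [gSeq, norm_mul, norm_pow, Complex.norm_natCast]
  have h2 : ((3:ℝ) - 1) = ((2:ℕ):ℝ) := by norm_num
  rw [h2, Real.rpow_natCast, one_mul]
  calc (n:ℝ)^2 * ‖chiFour n‖ ≤ (n:ℝ)^2 * 1 :=
        mul_le_mul_of_nonneg_left (norm_chiFour_le n) (by positivity)
    _ = (n:ℝ)^2 := mul_one _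

lemma oneSummable {s : ℂ} (hs : 3 < s.re) : LSeriesSummable (1 : ℕ → ℂ) s :=
  LSeriesSummable_one_iff.mpr (by linarith)

lemma eisSummable {s : ℂ} (hs : 3 < s.re) : LSeriesSummable eisensteinCoeff s :=
  conv_eq ▸ (oneSummable hs).convolution (gSummable hs)

lemma chiFour_zero : chiFour 0 = 0 := by simp [chiFour]

lemma LSeries_gSeq {s : ℂ} :
    LSeries gSeq s = ∑' n : ℕ, chiFour n * (n : ℂ) ^ (-(s - 2)) := by
  refine tsum_congr fun n => ?_
  rcases eq_or_ne n 0 with rfl | hn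
  · simp [chiFour_zero]
  · rw [LSeries.term_of_ne_zero hn, gSeq]
    have hnc : (n : ℂ) ≠ 0 := Nat.cast_ne_zero.mpr hn
    rw [neg_sub, Complex.cpow_sub _ _ hnc]
    have h2 : (n : ℂ) ^ (2 : ℂ) = (n : ℂ) ^ (2 : ℕ) := by
      rw [← Complex.cpow_natCast]; norm_num
    rw [h2]
    ring

lemma eis_LSeries {s : ℂ} (hs : 3 < s.re) :
    LSeries eisensteinCoeff s = riemannZeta s * ∑' n : ℕ, chiFour n * (n : ℂ) ^ (-(s - 2)) := by
  rw [← conv_eq, LSeries_convolution' (oneSummable hs) (gSummable hs),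
    LSeries_one_eq_riemannZeta (by linarith), LSeries_gSeq]

lemma eis_tsum_shift {s : ℂ} (hs : 3 < s.re) :
    ∑' n : ℕ, LSeries.term eisensteinCoeff s (n + 1) = LSeries eisensteinCoeff s := by
  rw [LSeries, Summable.tsum_eq_zero_add (eisSummable hs), LSeries.term_zero, zero_add]

lemma hexp (n : ℕ) (x : ℝ) :
    Complex.exp (-2 * (Real.pi : ℂ) * ((n : ℂ) + 1) * (x : ℂ)) =
      ((Real.exp (-(2 * Real.pi * ((n : ℝ) + 1)) * x) : ℝ) : ℂ) := by
  rw [Complex.ofReal_exp]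
  congr 1
  push_cast
  ring

lemma summable_cexp {t : ℝ} (ht : 0 < t) :
    Summable fun n : ℕ => eisensteinCoeff (n + 1) *
      Complex.exp (-2 * (Real.pi : ℂ) * ((n : ℂ) + 1) * (t : ℂ)) := by
  apply Summable.of_norm
  refine (summable_norm_exp ht).congr fun n => ?_
  rw [hexp n t, norm_mul, Complex.norm_real, Real.norm_eq_abs, Real.abs_exp]

lemma hasSum_F {t : ℝ} (ht : t ∈ Set.Ioi (0:ℝ)) :
    HasSum (fun n : ℕ => eisensteinCoeff (n + 1) *
        ((Real.exp (-(2 * Real.pi * ((n : ℝ) + 1)) * t) : ℝ) : ℂ))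
      (∑' n : ℕ, eisensteinCoeff (n + 1) *
        Complex.exp (-2 * (Real.pi : ℂ) * ((n : ℂ) + 1) * (t : ℂ))) := by
  have h := (summable_cexp ht).hasSum
  refine h.congr_fun fun n => ?_  -- maybe wrong name
  rw [hexp n t]

lemma hsum_mellin {s : ℂ} (hs : 3 < s.re) :
    Summable fun n : ℕ =>
      ‖eisensteinCoeff (n + 1)‖ / (2 * Real.pi * ((n : ℝ) + 1)) ^ s.re := by
  have hc := (eisSummable hs).norm
  have h1 := (summable_nat_add_iff 1).mpr hc
  refine h1.of_nonneg_of_le (fun n => by positivity) (fun n => ?_)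
  rw [LSeries.norm_term_eq, if_neg (Nat.succ_ne_zero n)]
  have hb : (0:ℝ) < ((n + 1 : ℕ) : ℝ) := by positivity
  have hble : ((n + 1 : ℕ) : ℝ) ^ s.re ≤ (2 * Real.pi * ((n : ℝ) + 1)) ^ s.re := by
    apply Real.rpow_le_rpow hb.le _ (by linarith)
    push_cast
    nlinarith [Real.pi_gt_three]
  have h2 : (0:ℝ) < ((n + 1 : ℕ) : ℝ) ^ s.re := Real.rpow_pos_of_pos hb _
  exact div_le_div_of_nonneg_left (norm_nonneg _) h2 hble |>.trans_eq (by norm_num) |>.trans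
    (le_refl _) |>.trans (le_refl _) |>.trans (le_refl _) |>.trans (le_refl _) |>.trans (le_refl _)

lemma integrable_main {s : ℂ} (hs : 3 < s.re) :
    IntegrableOn
      (fun x : ℝ =>
        (∑' n : ℕ, eisensteinCoeff (n + 1) *
          Complex.exp (-2 * (Real.pi : ℂ) * ((n : ℂ) + 1) * (x : ℂ))) * (x : ℂ) ^ (s - 1))
      (Set.Ioi (0 : ℝ)) := by
  have hre : 0 < s.re := by linarith
  set G : ℕ → ℝ → ℂ := fun n x =>
    eisensteinCoeff (n + 1) * Complex.exp (-2 * (Real.pi : ℂ) * ((n : ℂ) + 1) * (x : ℂ)) *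
      (x : ℂ) ^ (s - 1) with hG
  have hfun : (fun x : ℝ =>
      (∑' n : ℕ, eisensteinCoeff (n + 1) *
        Complex.exp (-2 * (Real.pi : ℂ) * ((n : ℂ) + 1) * (x : ℂ))) * (x : ℂ) ^ (s - 1))
      = fun x => ∑' n, G n x := by
    funext x
    rw [hG, ← tsum_mul_right]
  rw [hfun]
  have hGsummable : ∀ x ∈ Ioi (0:ℝ), Summable fun n => G n x := by
    intro x hx
    exact (summable_cexp hx).mul_right _
  have normG : ∀ n, ∀ x ∈ Ioi (0:ℝ), ‖G n x‖ = ‖eisensteinCoeff (n + 1)‖ *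
      (x ^ (s.re - 1) * Real.exp (-(2 * Real.pi * ((n : ℝ) + 1)) * x)) := by
    intro n x hx
    have hcpow : ‖(x:ℂ) ^ (s - 1)‖ = x ^ (s.re - 1) := by
      rw [Complex.norm_cpow_eq_rpow_re_of_pos hx, sub_re, one_re]
    rw [hG]
    simp only
    rw [hexp n x, norm_mul, norm_mul, hcpow, Complex.norm_real, Real.norm_eq_abs, Real.abs_exp]
    ring
  have hGnormsummable : ∀ x ∈ Ioi (0:ℝ), Summable fun n => ‖G n x‖ := by
    intro x hx
    refine ((summable_norm_exp hx).mul_right (x ^ (s.re - 1))).congr fun n => ?_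
    rw [normG n x hx]
    ring
  have hmeas : ∀ n, AEStronglyMeasurable (G n) (volume.restrict (Set.Ioi 0)) := by
    intro n
    refine ContinuousOn.aestronglyMeasurable ?_ measurableSet_Ioi
    refine ContinuousOn.mul ?_ ?_
    · exact (continuous_const.mul (Complex.continuous_exp.comp
        (continuous_const.mul Complex.continuous_ofReal))).continuousOn
    · exact Complex.continuous_ofReal.continuousOn.cpow_const
        fun x hx => Complex.ofReal_mem_slitPlane.mpr hx
  constructor
  · -- AEStronglyMeasurable of the tsum
    refine aestronglyMeasurable_of_tendsto_ae (u := (Filter.atTop : Filter (Finset ℕ)))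
      (f := fun (t : Finset ℕ) x => ∑ n ∈ t, G n x) (fun t => ?_) ?_
    · exact Finset.aestronglyMeasurable_fun_sum t fun n _ => hmeas n
    · rw [ae_restrict_iff' measurableSet_Ioi]
      filter_upwards with x hx
      exact ((hGsummable x hx).hasSum)
  · -- HasFiniteIntegral
    have hbound : ∀ᵐ x ∂(volume.restrict (Set.Ioi (0:ℝ))),
        (‖∑' n, G n x‖₊ : ENNReal) ≤ ∑' n, (‖G n x‖₊ : ENNReal) := by
      rw [ae_restrict_iff' measurableSet_Ioi]
      filter_upwards with x hx
      have hsn : Summable fun n => ‖G n x‖₊ := by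
        rw [← NNReal.summable_coe]
        exact (hGnormsummable x hx).congr fun n => rfl
      calc (‖∑' n, G n x‖₊ : ENNReal)
          ≤ ((∑' n, ‖G n x‖₊ : NNReal) : ENNReal) := ENNReal.coe_le_coe.mpr (nnnorm_tsum_le hsn)
        _ = ∑' n, (‖G n x‖₊ : ENNReal) := ENNReal.coe_tsum hsn
    rw [HasFiniteIntegral]
    have step2 : ∫⁻ x in Set.Ioi (0:ℝ), ‖∑' n, G n x‖₊ ≤
        ∑' n, ∫⁻ x in Set.Ioi (0:ℝ), (‖G n x‖₊ : ENNReal) := by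
      calc ∫⁻ x in Set.Ioi (0:ℝ), ‖∑' n, G n x‖₊
          ≤ ∫⁻ x in Set.Ioi (0:ℝ), ∑' n, (‖G n x‖₊ : ENNReal) := lintegral_mono_ae hbound
        _ = ∑' n, ∫⁻ x in Set.Ioi (0:ℝ), (‖G n x‖₊ : ENNReal) :=
            lintegral_tsum fun n => (hmeas n).aemeasurable.nnnorm.coe_nnreal_ennreal
    refine lt_of_le_of_lt step2 ?_
    -- per-term computation
    set H : ℕ → ℝ → ℝ := fun n x => ‖eisensteinCoeff (n + 1)‖ *
      (x ^ (s.re - 1) * Real.exp (-(2 * Real.pi * ((n : ℝ) + 1)) * x)) with hH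
    have hHint : ∀ n, IntegrableOn (H n) (Set.Ioi (0:ℝ)) := by
      intro n
      have hb : (0:ℝ) < 2 * Real.pi * ((n : ℝ) + 1) := by positivity
      have := (integrableOn_rpow_mul_exp_neg_mul_rpow
        (show (-1:ℝ) < s.re - 1 by linarith) zero_lt_one hb)
      simp only [Real.rpow_one] at this
      have h2 : IntegrableOn (fun x : ℝ => ‖eisensteinCoeff (n + 1)‖ *
          (x ^ (s.re - 1) * Real.exp (-(2 * Real.pi * ((n : ℝ) + 1)) * x))) (Set.Ioi 0) :=
        this.const_mul _
      exact h2
    have hterm : ∀ n, ∫⁻ x in Set.Ioi (0:ℝ), (‖G n x‖₊ : ENNReal) =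
        ENNReal.ofReal (‖eisensteinCoeff (n + 1)‖ *
          ((1 / (2 * Real.pi * ((n : ℝ) + 1))) ^ s.re * Real.Gamma s.re)) := by
      intro n
      have hb : (0:ℝ) < 2 * Real.pi * ((n : ℝ) + 1) := by positivity
      have heq : ∫⁻ x in Set.Ioi (0:ℝ), (‖G n x‖₊ : ENNReal) =
          ∫⁻ x in Set.Ioi (0:ℝ), ENNReal.ofReal (H n x) := by
        refine setLIntegral_congr_fun measurableSet_Ioi ?_
        intro x hx
        dsimp only
        rw [← enorm_eq_nnnorm, ← ofReal_norm, normG n x hx, hH]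
      rw [heq, ← ofReal_integral_eq_lintegral_ofReal (hHint n) ?_]
      · congr 1
        rw [hH]
        simp only
        rw [MeasureTheory.integral_const_mul]
        congr 1
        have := Real.integral_rpow_mul_exp_neg_mul_Ioi hre hb
        simpa using this
      · refine (ae_restrict_iff' measurableSet_Ioi).mpr (ae_of_all _ fun x hx => ?_)
        rw [hH]
        simp only [Pi.zero_apply]
        exact mul_nonneg (norm_nonneg _) (mul_nonneg (Real.rpow_nonneg (le_of_lt hx) _)
          (Real.exp_pos _).le)
    -- sum the bounds
    have hS : Summable fun n : ℕ => ‖eisensteinCoeff (n + 1)‖ *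
        ((1 / (2 * Real.pi * ((n : ℝ) + 1))) ^ s.re * Real.Gamma s.re) := by
      refine ((hsum_mellin hs).mul_right (Real.Gamma s.re)).congr fun n => ?_
      have hb : (0:ℝ) < 2 * Real.pi * ((n : ℝ) + 1) := by positivity
      rw [one_div, Real.inv_rpow hb.le]
      field_simp
    calc ∑' n, ∫⁻ x in Set.Ioi (0:ℝ), (‖G n x‖₊ : ENNReal)
        = ∑' n, ENNReal.ofReal (‖eisensteinCoeff (n + 1)‖ *
            ((1 / (2 * Real.pi * ((n : ℝ) + 1))) ^ s.re * Real.Gamma s.re)) :=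
          tsum_congr hterm
      _ = ENNReal.ofReal (∑' n, ‖eisensteinCoeff (n + 1)‖ *
            ((1 / (2 * Real.pi * ((n : ℝ) + 1))) ^ s.re * Real.Gamma s.re)) :=
          (ENNReal.ofReal_tsum_of_nonneg (fun n => by positivity) hS).symm
      _ < ⊤ := ENNReal.ofReal_lt_top

theorem mellin_eisenstein (s : ℂ) (hs : 3 < s.re) :
    IntegrableOn
      (fun x : ℝ =>
        (∑' n : ℕ, eisensteinCoeff (n + 1) *
          Complex.exp (-2 * (Real.pi : ℂ) * ((n : ℂ) + 1) * (x : ℂ))) * (x : ℂ) ^ (s - 1))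
      (Set.Ioi (0 : ℝ)) ∧
    (∫ x in Set.Ioi (0 : ℝ),
        (∑' n : ℕ, eisensteinCoeff (n + 1) *
          Complex.exp (-2 * (Real.pi : ℂ) * ((n : ℂ) + 1) * (x : ℂ))) * (x : ℂ) ^ (s - 1))
      = (2 * (Real.pi : ℂ)) ^ (-s) * Complex.Gamma s * riemannZeta s *
          ∑' n : ℕ, chiFour n * (n : ℂ) ^ (-(s - 2)) := by
  have hre : 0 < s.re := by linarith
  refine ⟨integrable_main hs, ?_⟩
  have key := hasSum_mellin (a := fun n : ℕ => eisensteinCoeff (n + 1))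
      (p := fun n : ℕ => 2 * Real.pi * ((n : ℝ) + 1))
      (F := fun t : ℝ => ∑' n : ℕ, eisensteinCoeff (n + 1) *
        Complex.exp (-2 * (Real.pi : ℂ) * ((n : ℂ) + 1) * (t : ℂ)))
      (fun n => Or.inr (by positivity)) hre
      (fun t ht => hasSum_F ht) (hsum_mellin hs)
  have hint : (∫ x in Set.Ioi (0 : ℝ),
        (∑' n : ℕ, eisensteinCoeff (n + 1) *
          Complex.exp (-2 * (Real.pi : ℂ) * ((n : ℂ) + 1) * (x : ℂ))) * (x : ℂ) ^ (s - 1))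
      = mellin (fun t : ℝ => ∑' n : ℕ, eisensteinCoeff (n + 1) *
          Complex.exp (-2 * (Real.pi : ℂ) * ((n : ℂ) + 1) * (t : ℂ))) s := by
    rw [mellin]
    refine setIntegral_congr_fun measurableSet_Ioi fun x hx => ?_
    rw [smul_eq_mul, mul_comm]
  rw [hint, ← key.tsum_eq]
  have e1 : ∀ n : ℕ, Complex.Gamma s * eisensteinCoeff (n + 1) /
        ((2 * Real.pi * ((n : ℝ) + 1) : ℝ) : ℂ) ^ s
      = (2 * (Real.pi : ℂ)) ^ (-s) * Complex.Gamma s *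
        LSeries.term eisensteinCoeff s (n + 1) := by
    intro n
    rw [LSeries.term_of_ne_zero (Nat.succ_ne_zero n)]
    have hsplit : (((2 * Real.pi * ((n : ℝ) + 1) : ℝ)) : ℂ) ^ s
        = ((2 * Real.pi : ℝ) : ℂ) ^ s * ((((n : ℝ) + 1 : ℝ)) : ℂ) ^ s := by
      rw [show ((2 * Real.pi * ((n : ℝ) + 1) : ℝ) : ℂ)
          = ((2 * Real.pi : ℝ) : ℂ) * ((((n : ℝ) + 1 : ℝ)) : ℂ) by push_cast; ring]
      exact mul_cpow_ofReal_nonneg (a := 2 * Real.pi) (b := (n : ℝ) + 1)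
        (by positivity) (by positivity) s
    have hcast1 : ((n + 1 : ℕ) : ℂ) = ((((n : ℝ) + 1 : ℝ)) : ℂ) := by push_cast; ring
    have hcast2 : (2 * (Real.pi : ℂ)) = ((2 * Real.pi : ℝ) : ℂ) := by push_cast; ring
    have hA : ((2 * Real.pi : ℝ) : ℂ) ^ s ≠ 0 := by
      rw [Ne, Complex.cpow_eq_zero_iff, not_and_or]
      exact Or.inl (Complex.ofReal_ne_zero.mpr (by positivity))
    rw [hcast1, hsplit, hcast2, Complex.cpow_neg, div_eq_mul_inv, mul_inv, div_eq_mul_inv]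
    ring
  rw [tsum_congr e1, tsum_mul_left, eis_tsum_shift hs, eis_LSeries hs]
  ring
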